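/- For all real u, exp_φ(u) ≤ 1 + u/2 + u²/12. -/

import Mathlib

lemma sinh_le_mul_cosh {s : ℝ} (hs : 0 ≤ s) : Real.sinh s ≤ s * Real.cosh s := by
  have hd : ∀ x : ℝ, HasDerivAt (fun x : ℝ => x * Real.cosh x - Real.sinh x)
      (x * Real.sinh x) x := by
    intro x
    have h1 := (hasDerivAt_id x).mul (Real.hasDerivAt_cosh x)
    have h2 := (h1.sub (Real.hasDerivAt_sinh x))
    refine h2.congr_deriv ?_
    simp [id, mul_comm]
  have h : MonotoneOn (fun x : ℝ => x * Real.cosh x - Real.sinh x) (Set.Ici 0) := by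
    apply monotoneOn_of_deriv_nonneg (convex_Ici 0)
    · exact (Continuous.continuousOn (by continuity))
    · intro x _; exact (hd x).differentiableAt.differentiableWithinAt
    · intro x hx
      rw [(hd x).deriv]
      have hx' : 0 ≤ x := le_of_lt (by simpa using hx)
      exact mul_nonneg hx' ((Real.sinh_nonneg_iff.mpr hx'))
  have := h Set.self_mem_Ici (Set.mem_Ici.mpr hs) hs
  simpa using this

-- for v ≥ 1 : log v * (v+1) ≥ 2 (v-1)
lemma log_lower_ge_one {v : ℝ} (hv : 1 ≤ v) : 2 * (v - 1) ≤ Real.log v * (v + 1) := by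
  set t := Real.log v with ht
  have ht0 : 0 ≤ t := Real.log_nonneg hv
  have hv0 : 0 < v := lt_of_lt_of_le one_pos hv
  have hvexp : v = Real.exp t := (Real.exp_log hv0).symm
  have hkey := sinh_le_mul_cosh (by linarith : (0:ℝ) ≤ t / 2)
  have hE : 0 < Real.exp (t / 2) := Real.exp_pos _
  have hsinh : Real.sinh (t/2) = (Real.exp (t/2) - (Real.exp (t/2))⁻¹) / 2 := by
    rw [Real.sinh_eq, Real.exp_neg]
  have hcosh : Real.cosh (t/2) = (Real.exp (t/2) + (Real.exp (t/2))⁻¹) / 2 := by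
    rw [Real.cosh_eq, Real.exp_neg]
  have hsq : Real.exp (t/2) * Real.exp (t/2) = Real.exp t := by
    rw [← Real.exp_add]; ring_nf
  rw [hsinh, hcosh] at hkey
  have hinv : Real.exp (t/2) * (Real.exp (t/2))⁻¹ = 1 := mul_inv_cancel₀ (ne_of_gt hE)
  rw [hvexp]
  nlinarith [mul_le_mul_of_nonneg_left hkey (le_of_lt hE), hE, hsq, hinv]

-- for 0 < v ≤ 1 : log v * (2v) ≥ v^2 - 1
lemma log_lower_le_one {v : ℝ} (hv0 : 0 < v) (hv : v ≤ 1) :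
    v ^ 2 - 1 ≤ Real.log v * (2 * v) := by
  set t := -Real.log v with ht
  clear_value t
  have ht0 : 0 ≤ t := by
    have := Real.log_nonpos (le_of_lt hv0) hv
    rw [ht]; linarith
  have hsinh : t ≤ Real.sinh t := Real.self_le_sinh_iff.mpr ht0
  have hE : 0 < Real.exp t := Real.exp_pos _
  have hs : Real.sinh t = (Real.exp t - (Real.exp t)⁻¹) / 2 := by
    rw [Real.sinh_eq, Real.exp_neg]
  rw [hs] at hsinh
  have hve : v * Real.exp t = 1 := by
    have : Real.exp t = (Real.exp (Real.log v))⁻¹ := by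
      rw [← Real.exp_neg, ← ht]
    rw [this, Real.exp_log hv0, mul_inv_cancel₀ (ne_of_gt hv0)]
  have hEinv : (Real.exp t)⁻¹ = v := (eq_inv_of_mul_eq_one_left hve).symm
  have hlog : Real.log v = -t := by rw [ht]; ring
  rw [hEinv] at hsinh
  rw [hlog]
  nlinarith [mul_le_mul_of_nonneg_left hsinh (le_of_lt hv0), hve, hv0]

theorem expPhi_quadratic_bound (expφ : ℝ → ℝ) (hpos : ∀ u, 0 < expφ u)
    (hinv : ∀ u, expφ u - 1 + Real.log (expφ u) = u) :
    ∀ u : ℝ, expφ u ≤ 1 + u / 2 + u ^ 2 / 12 := by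
  intro u
  set v := expφ u with hvdef
  have hv : 0 < v := hpos u
  have hu : v - 1 + Real.log v = u := hinv u
  set L := Real.log v with hL
  have key : 12 * v - 3 ≤ (L + v + 2) ^ 2 := by
    rcases le_or_gt v 1 with h1 | h1
    · rcases le_or_gt v (1/4) with h4 | h4
      · nlinarith [sq_nonneg (L + v + 2)]
      · have hB := log_lower_le_one hv h1
        have hAB : 0 ≤ L * (2*v) - (v^2 - 1) := by linarith
        have hBpos : 0 < 3*v^2 + 4*v - 1 := by nlinarith
        have hsum : 0 ≤ (2*v*(L+v+2)) + (3*v^2+4*v-1) := by nlinarith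
        nlinarith [mul_nonneg hAB hsum, sq_nonneg ((v-1)*(3*v-1)), mul_pos hv hv]
    · have hA := log_lower_ge_one (le_of_lt h1)
      have hAB : 0 ≤ L * (v+1) - 2*(v-1) := by linarith
      have hL0 : 0 ≤ L := Real.log_nonneg (le_of_lt h1)
      have hsum : 0 ≤ ((v+1)*(L+v+2)) + (v^2+5*v) := by nlinarith
      nlinarith [mul_nonneg hAB hsum, sq_nonneg ((v-1)), mul_pos hv hv,
        mul_nonneg (mul_nonneg (sq_nonneg (v-1)) (le_of_lt hv)) (le_of_lt hv)]
  have h2 : 12 * v ≤ 12 + 6 * u + u ^ 2 := by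
    rw [← hu]; nlinarith [key]
  linarith
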